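/- Let V and M be finite-dimensional real inner product spaces, and let L : V → M → M be a velocity map that is linear in its first argument and such that for each w ∈ V the map Q ↦ L w Q is continuously differentiable. Suppose the closure condition holds: there is a bracket b : V → V → V such that L (b u v) Q = (D(L v)(Q))(L u Q) − (D(L u)(Q))(L v Q) for all u, v ∈ V and Q ∈ M. Let ξ : ℝ → V be continuous, g : ℝ → M be continuous (playing the role of δl/δQ along the solution), and let Q, P : ℝ → M be differentiable curves satisfying, for all t: (i) Q′(t) = L (ξ t) (Q t), and (ii) ⟪P′(t), v⟫ = −⟪P t, (D(L (ξ t))(Q t))(v)⟫ + ⟪g t, v⟫ for every v ∈ M. Then for every w ∈ V, the function t ↦ ⟪P t, L w (Q t)⟫ is differentiable with derivative ⟪P t, L (b (ξ t) w) (Q t)⟫ + ⟪g t, L w (Q t)⟫; this is the Euler–Poincaré equation with advected quantities, the extra term being the pairing ⟨−(δl/δQ) ⋄ Q, w⟩ = ⟪g, L w Q⟫. -/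

import Mathlib

open RealInnerProductSpace

/-- **Elimination theorem with potential energy (forward direction).**
If the velocity map `L` is closed with bracket `b`, then along solutions of
the Clebsch equations with a potential force term `g = δl/δQ` the momentum
pairing satisfies the Euler–Poincaré equation with advected quantities. -/
theorem clebsch_elimination_euler_poincare_with_potential
    {V M : Type*}
    [NormedAddCommGroup V] [InnerProductSpace ℝ V] [FiniteDimensional ℝ V]
    [NormedAddCommGroup M] [InnerProductSpace ℝ M] [FiniteDimensional ℝ M]
    (L : V → M → M)
    (hLlin : ∀ Q : M, IsLinearMap ℝ (fun w : V => L w Q))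
    (hLsmooth : ∀ w : V, ContDiff ℝ 1 (fun Q : M => L w Q))
    (b : V → V → V)
    (hclosed : ∀ (u v : V) (Q : M),
      L (b u v) Q = fderiv ℝ (L v) Q (L u Q) - fderiv ℝ (L u) Q (L v Q))
    (ξ : ℝ → V) (hξ : Continuous ξ)
    (g : ℝ → M) (hg : Continuous g)
    (Q P : ℝ → M) (P' : ℝ → M)
    (hQ : ∀ t : ℝ, HasDerivAt Q (L (ξ t) (Q t)) t)
    (hP : ∀ t : ℝ, HasDerivAt P (P' t) t)
    (hPeq : ∀ (t : ℝ) (v : M),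
      ⟪P' t, v⟫ = -⟪P t, fderiv ℝ (L (ξ t)) (Q t) v⟫ + ⟪g t, v⟫) :
    ∀ (w : V) (t : ℝ),
      HasDerivAt (fun s : ℝ => ⟪P s, L w (Q s)⟫)
        (⟪P t, L (b (ξ t) w) (Q t)⟫ + ⟪g t, L w (Q t)⟫) t := by
  intro w t
  have hLw : DifferentiableAt ℝ (L w) (Q t) :=
    ((hLsmooth w).differentiable one_ne_zero).differentiableAt
  have hQw : HasDerivAt (fun s => L w (Q s))
      (fderiv ℝ (L w) (Q t) (L (ξ t) (Q t))) t :=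
    hLw.hasFDerivAt.comp_hasDerivAt t (hQ t)
  have h := (hP t).inner ℝ hQw
  refine h.congr_deriv ?_
  rw [hPeq t (L w (Q t)), hclosed (ξ t) w (Q t), inner_sub_right]
  ring
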